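/- For Ω = [0,∞)^d \ [0,1]^d and B = ∅, the three notions of independence coincide: Y_A ⫫_o Y_C ⟺ Y_A ⫫_i Y_C ⟺ Y_A ⫫_e Y_C, with no distributional assumptions on Y beyond its support being Ω. -/

import Mathlib

open MeasureTheory ProbabilityTheory Set
open scoped ENNReal

noncomputable section

/-- `L^1 = [0,1]^ι`. -/
def box1 (ι : Type*) : Set (ι → ℝ) := {x | ∀ i, x i ∈ Set.Icc (0:ℝ) 1}

/-- `L^2 = [0,∞)^ι \ [0,1]^ι`. -/
def box2 (ι : Type*) : Set (ι → ℝ) := {x | ∀ i, 0 ≤ x i} \ box1 ι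

/-- The Engelke–Hitz region `Ω = [0,∞)^d \ [0,1]^d`. -/
def omEH (ιA ιC : Type*) : Set ((ιA → ℝ) × (ιC → ℝ)) :=
  {p | (∀ i, 0 ≤ p.1 i) ∧ (∀ j, 0 ≤ p.2 j)} \ {p | p.1 ∈ box1 ιA ∧ p.2 ∈ box1 ιC}

/-- the topological support of `ν` is `S`: `S` carries all the mass and every open set
meeting `S` has positive mass. -/
def HasSupport {γ : Type*} [MeasurableSpace γ] [TopologicalSpace γ]
    (ν : Measure γ) (S : Set γ) : Prop :=
  ν Sᶜ = 0 ∧ ∀ U : Set γ, IsOpen U → (U ∩ S).Nonempty → 0 < ν U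

/-- `X ⫫ Y` conditionally on the event `E`. -/
def condIndepOn {Ω₀ : Type*} [MeasurableSpace Ω₀] (μ : Measure Ω₀) (E : Set Ω₀)
    {α β : Type*} [MeasurableSpace α] [MeasurableSpace β]
    (X : Ω₀ → α) (Y : Ω₀ → β) : Prop :=
  ∀ (HA : Set α) (HC : Set β), MeasurableSet HA → MeasurableSet HC →
    μ[|E] (X ⁻¹' HA ∩ Y ⁻¹' HC) = μ[|E] (X ⁻¹' HA) * μ[|E] (Y ⁻¹' HC)

/-- outer independence. -/
def OuterIndep {Ω₀ : Type} [MeasurableSpace Ω₀] (μ : Measure Ω₀)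
    {α β : Type} [MeasurableSpace α] [MeasurableSpace β]
    (YA : Ω₀ → α) (YC : Ω₀ → β) (Om : Set (α × β)) : Prop :=
  ∃ (Ω' : Type) (_ : MeasurableSpace Ω') (P : Measure Ω') (WA : Ω' → α) (WC : Ω' → β)
    (LA : Set α) (LC : Set β),
    IsProbabilityMeasure P ∧ Measurable WA ∧ Measurable WC ∧
    Om ⊆ LA ×ˢ LC ∧
    P ((fun ω => (WA ω, WC ω)) ⁻¹' (LA ×ˢ LC)) = 1 ∧
    IndepFun WA WC P ∧
    (P[|(fun ω => (WA ω, WC ω)) ⁻¹' Om]).map (fun ω => (WA ω, WC ω)) =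
      μ.map (fun ω => (YA ω, YC ω))

/-- inner independence. -/
def InnerIndep {Ω₀ : Type} [MeasurableSpace Ω₀] (μ : Measure Ω₀)
    {α β : Type} [MeasurableSpace α] [MeasurableSpace β]
    (YA : Ω₀ → α) (YC : Ω₀ → β) (Om : Set (α × β)) : Prop :=
  ∀ (SA : Set α) (SC : Set β), MeasurableSet SA → MeasurableSet SC →
    SA ×ˢ SC ⊆ Om →
    0 < μ ((fun ω => (YA ω, YC ω)) ⁻¹' (SA ×ˢ SC)) →
    condIndepOn μ ((fun ω => (YA ω, YC ω)) ⁻¹' (SA ×ˢ SC)) YA YC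

/-- Engelke–Hitz extremal independence: `Y_A ⫫ Y_C` given `{Y_k > 1}` for every `k`. -/
def EHIndep {Ω₀ : Type} [MeasurableSpace Ω₀] (μ : Measure Ω₀) {ιA ιC : Type}
    (YA : Ω₀ → ιA → ℝ) (YC : Ω₀ → ιC → ℝ) : Prop :=
  (∀ k : ιA, condIndepOn μ {ω | 1 < YA ω k} YA YC) ∧
  (∀ k : ιC, condIndepOn μ {ω | 1 < YC ω k} YA YC)

namespace Stmt8Aux

/-- Any measurable set in a product σ-algebra depends on countably many coordinates. -/
lemma dependsOn_of_measurableSet {ι : Type*} {π : ι → Type*} [m : ∀ i, MeasurableSpace (π i)]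
    {S : Set (∀ i, π i)} (hS : MeasurableSet S) :
    ∃ J : Set ι, J.Countable ∧ ∀ x y : ∀ i, π i, (∀ i ∈ J, x i = y i) → (x ∈ S ↔ y ∈ S) := by
  have h : MeasurableSet[⨆ i, (m i).comap fun x => x i] S := hS
  rw [MeasurableSpace.measurableSet_iSup] at h
  clear hS
  induction h with
  | basic u hu =>
      obtain ⟨i, hu⟩ := hu
      rw [MeasurableSpace.measurableSet_comap] at hu
      obtain ⟨t, _, rfl⟩ := hu
      exact ⟨{i}, Set.countable_singleton i, fun x y hxy => by
        simp only [Set.mem_preimage, hxy i (Set.mem_singleton i)]⟩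
  | empty => exact ⟨∅, Set.countable_empty, fun _ _ _ => Iff.rfl⟩
  | compl t _ ih =>
      obtain ⟨J, hJ, hinv⟩ := ih
      exact ⟨J, hJ, fun x y hxy => not_congr (hinv x y hxy)⟩
  | iUnion f _ ih =>
      choose J hJc hJinv using ih
      refine ⟨⋃ n, J n, Set.countable_iUnion hJc, fun x y hxy => ?_⟩
      simp only [Set.mem_iUnion]
      exact exists_congr fun n => hJinv n x y fun i hi => hxy i (Set.mem_iUnion.2 ⟨n, hi⟩)


lemma measSet_nonneg {ι : Type} [Countable ι] : MeasurableSet {x : ι → ℝ | ∀ i, 0 ≤ x i} := by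
  have : {x : ι → ℝ | ∀ i, 0 ≤ x i} = ⋂ i, {x : ι → ℝ | 0 ≤ x i} := by ext x; simp
  rw [this]
  exact MeasurableSet.iInter fun i => measurableSet_le measurable_const (measurable_pi_apply i)

lemma measSet_box1 {ι : Type} [Countable ι] : MeasurableSet (box1 ι) := by
  have : box1 ι = ⋂ i, (fun x : ι → ℝ => x i) ⁻¹' Set.Icc (0:ℝ) 1 := by ext x; simp [box1]
  rw [this]
  exact MeasurableSet.iInter fun i => (measurable_pi_apply i) measurableSet_Icc

lemma measSet_omEH {ιA ιC : Type} [Countable ιA] [Countable ιC] :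
    MeasurableSet (omEH ιA ιC) :=
  ((measSet_nonneg.preimage measurable_fst).inter (measSet_nonneg.preimage measurable_snd)).diff
    ((measSet_box1.preimage measurable_fst).inter (measSet_box1.preimage measurable_snd))

lemma cond_map {Ω₀ γ' : Type*} [MeasurableSpace Ω₀] [MeasurableSpace γ'] (μ : Measure Ω₀)
    {Y : Ω₀ → γ'} (hY : Measurable Y) {S T : Set γ'} (hS : MeasurableSet S)
    (hT : MeasurableSet T) :
    μ[|Y ⁻¹' S] (Y ⁻¹' T) = (μ.map Y)[|S] T := by
  rw [cond_apply' (hY hT), cond_apply' hT, Measure.map_apply hY hS,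
    Measure.map_apply hY (hS.inter hT), Set.preimage_inter]

lemma cond_value_congr {Ω₀ : Type*} [MeasurableSpace Ω₀] (μ : Measure Ω₀) {E E' : Set Ω₀}
    (hsub : E' ⊆ E) (hnull : μ (E \ E') = 0) {t : Set Ω₀} (ht : MeasurableSet t) :
    μ[|E] t = μ[|E'] t := by
  have hE : μ E = μ E' := le_antisymm
    (calc μ E ≤ μ (E' ∪ (E \ E')) := measure_mono (fun x hx => by
          by_cases h : x ∈ E'
          · exact Or.inl h
          · exact Or.inr ⟨hx, h⟩)
      _ ≤ μ E' + μ (E \ E') := measure_union_le _ _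
      _ = μ E' := by rw [hnull, add_zero])
    (measure_mono hsub)
  have hEt : μ (E ∩ t) = μ (E' ∩ t) := le_antisymm
    (calc μ (E ∩ t) ≤ μ ((E' ∩ t) ∪ (E \ E')) := measure_mono (fun x hx => by
          by_cases h : x ∈ E'
          · exact Or.inl ⟨h, hx.2⟩
          · exact Or.inr ⟨hx.1, h⟩)
      _ ≤ μ (E' ∩ t) + μ (E \ E') := measure_union_le _ _
      _ = μ (E' ∩ t) := by rw [hnull, add_zero])
    (measure_mono (inter_subset_inter_left _ hsub))
  rw [cond_apply' ht, cond_apply' ht, hE, hEt]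

lemma not_support_uncountable_left {ιA ιC : Type}
    (hun : ¬ Countable ιA) (ν : Measure ((ιA → ℝ) × (ιC → ℝ))) [IsProbabilityMeasure ν]
    (h : ν (omEH ιA ιC)ᶜ = 0) : False := by
  classical
  obtain ⟨N, hsub, hNmeas, hN0⟩ := exists_measurable_superset_of_null h
  have hNc : ν Nᶜ ≠ 0 := by
    rw [measure_compl hNmeas (measure_ne_top _ _), hN0, measure_univ, tsub_zero]
    exact one_ne_zero
  obtain ⟨p, hp⟩ := nonempty_of_measure_ne_zero hNc
  have hpOm : ∀ q ∈ Nᶜ, q ∈ omEH ιA ιC := fun q hq => by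
    by_contra hcon; exact hq (hsub hcon)
  set S : Set (ιA → ℝ) := (fun x => (x, p.2)) ⁻¹' Nᶜ with hSdef
  have hSmeas : MeasurableSet S :=
    (measurable_id.prodMk measurable_const) hNmeas.compl
  obtain ⟨J, hJc, hJinv⟩ := dependsOn_of_measurableSet hSmeas
  obtain ⟨i₀, hi₀⟩ : ∃ i₀ : ιA, i₀ ∉ J := by
    by_contra hcon
    push_neg at hcon
    have : J = Set.univ := Set.eq_univ_of_forall hcon
    rw [this, Set.countable_univ_iff] at hJc
    exact hun hJc
  have hp1 : p.1 ∈ S := by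
    simp only [hSdef, Set.mem_preimage]
    exact hp
  have hy : Function.update p.1 i₀ (-1 : ℝ) ∈ S := by
    refine (hJinv p.1 _ fun i hi => ?_).mp hp1
    exact (Function.update_of_ne (fun hcon => hi₀ (by rw [← hcon]; exact hi)) _ _).symm
  have := (hpOm _ hy).1.1 i₀
  simp only [Function.update_self] at this
  linarith

lemma not_support_uncountable_right {ιA ιC : Type}
    (hun : ¬ Countable ιC) (ν : Measure ((ιA → ℝ) × (ιC → ℝ))) [IsProbabilityMeasure ν]
    (h : ν (omEH ιA ιC)ᶜ = 0) : False := by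
  classical
  obtain ⟨N, hsub, hNmeas, hN0⟩ := exists_measurable_superset_of_null h
  have hNc : ν Nᶜ ≠ 0 := by
    rw [measure_compl hNmeas (measure_ne_top _ _), hN0, measure_univ, tsub_zero]
    exact one_ne_zero
  obtain ⟨p, hp⟩ := nonempty_of_measure_ne_zero hNc
  have hpOm : ∀ q ∈ Nᶜ, q ∈ omEH ιA ιC := fun q hq => by
    by_contra hcon; exact hq (hsub hcon)
  set S : Set (ιC → ℝ) := (fun y => (p.1, y)) ⁻¹' Nᶜ with hSdef
  have hSmeas : MeasurableSet S :=
    (measurable_const.prodMk measurable_id) hNmeas.compl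
  obtain ⟨J, hJc, hJinv⟩ := dependsOn_of_measurableSet hSmeas
  obtain ⟨i₀, hi₀⟩ : ∃ i₀ : ιC, i₀ ∉ J := by
    by_contra hcon
    push_neg at hcon
    have : J = Set.univ := Set.eq_univ_of_forall hcon
    rw [this, Set.countable_univ_iff] at hJc
    exact hun hJc
  have hp2 : p.2 ∈ S := by
    simp only [hSdef, Set.mem_preimage]
    exact hp
  have hy : Function.update p.2 i₀ (-1 : ℝ) ∈ S := by
    refine (hJinv p.2 _ fun i hi => ?_).mp hp2
    exact (Function.update_of_ne (fun hcon => hi₀ (by rw [← hcon]; exact hi)) _ _).symm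
  have := (hpOm _ hy).1.2 i₀
  simp only [Function.update_self] at this
  linarith


lemma cancel3 {w a b c : ℝ≥0∞} (hw0 : w ≠ 0) (hwt : w ≠ ∞)
    (h : w⁻¹ * a = (w⁻¹ * b) * (w⁻¹ * c)) : a * w = b * c := by
  have hcan : w * w⁻¹ = 1 := ENNReal.mul_inv_cancel hw0 hwt
  calc a * w = (w * w⁻¹) * (a * w) := by rw [hcan, one_mul]
    _ = (w * w) * (w⁻¹ * a) := by ring
    _ = (w * w) * ((w⁻¹ * b) * (w⁻¹ * c)) := by rw [h]
    _ = (w * w⁻¹) * ((w * w⁻¹) * (b * c)) := by ring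
    _ = b * c := by rw [hcan, one_mul, one_mul]

lemma key_factor {α β ι' : Type*} [MeasurableSpace α] [MeasurableSpace β] [Countable ι']
    [Nonempty ι'] (m : Measure (α × β)) [IsFiniteMeasure m] (e : ι' → Set α)
    (he : ∀ k, MeasurableSet (e k))
    (hpos : ∀ k j : ι', m ((e k ∩ e j) ×ˢ (univ : Set β)) ≠ 0)
    (hfact : ∀ (k : ι') (T : Set α), MeasurableSet T → T ⊆ e k → ∀ (C : Set β),
      MeasurableSet C →
      m (T ×ˢ C) * m (e k ×ˢ (univ : Set β)) = m (T ×ˢ (univ : Set β)) * m (e k ×ˢ C))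
    (k₀ : ι') {HA : Set α} {HC : Set β} (hHA : MeasurableSet HA) (hHC : MeasurableSet HC)
    (hsub : HA ⊆ ⋃ k, e k) :
    m (HA ×ˢ HC) * m (e k₀ ×ˢ (univ : Set β))
      = m (HA ×ˢ (univ : Set β)) * m (e k₀ ×ˢ HC) := by
  have hw0 : ∀ k, m (e k ×ˢ (univ : Set β)) ≠ 0 := fun k => by
    have := hpos k k; rwa [inter_self] at this
  have A1 := hfact
  have A2 : ∀ (k j : ι') (C : Set β), MeasurableSet C →
      m (e k ×ˢ C) * m (e j ×ˢ (univ : Set β)) = m (e j ×ˢ C) * m (e k ×ˢ (univ : Set β)) := by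
    intro k j C hc
    have h1 := A1 k (e k ∩ e j) ((he k).inter (he j)) Set.inter_subset_left C hc
    have h2 := A1 j (e k ∩ e j) ((he k).inter (he j)) Set.inter_subset_right C hc
    have key : m ((e k ∩ e j) ×ˢ (univ : Set β)) * (m (e k ×ˢ C) * m (e j ×ˢ (univ : Set β)))
        = m ((e k ∩ e j) ×ˢ (univ : Set β)) * (m (e j ×ˢ C) * m (e k ×ˢ (univ : Set β))) := by
      calc m ((e k ∩ e j) ×ˢ (univ : Set β)) * (m (e k ×ˢ C) * m (e j ×ˢ (univ : Set β)))
          = (m ((e k ∩ e j) ×ˢ C) * m (e k ×ˢ (univ : Set β))) * m (e j ×ˢ (univ : Set β)) := by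
            rw [h1]; ring
        _ = (m ((e k ∩ e j) ×ˢ C) * m (e j ×ˢ (univ : Set β))) * m (e k ×ˢ (univ : Set β)) := by
            ring
        _ = m ((e k ∩ e j) ×ˢ (univ : Set β)) * (m (e j ×ˢ C) * m (e k ×ˢ (univ : Set β))) := by
            rw [h2]; ring
    exact (ENNReal.mul_right_inj (hpos k j) (measure_ne_top m _)).mp key
  have A3 : ∀ (k : ι') (T : Set α), MeasurableSet T → T ⊆ e k → ∀ (C : Set β), MeasurableSet C →
      m (T ×ˢ C) * m (e k₀ ×ˢ (univ : Set β)) = m (T ×ˢ (univ : Set β)) * m (e k₀ ×ˢ C) := by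
    intro k T hT hTe C hc
    have h1 := A1 k T hT hTe C hc
    have h2 := A2 k k₀ C hc
    have key : (m (T ×ˢ C) * m (e k₀ ×ˢ (univ : Set β))) * m (e k ×ˢ (univ : Set β))
        = (m (T ×ˢ (univ : Set β)) * m (e k₀ ×ˢ C)) * m (e k ×ˢ (univ : Set β)) := by
      calc (m (T ×ˢ C) * m (e k₀ ×ˢ (univ : Set β))) * m (e k ×ˢ (univ : Set β))
          = (m (T ×ˢ C) * m (e k ×ˢ (univ : Set β))) * m (e k₀ ×ˢ (univ : Set β)) := by ring
        _ = m (T ×ˢ (univ : Set β)) * (m (e k ×ˢ C) * m (e k₀ ×ˢ (univ : Set β))) := by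
            rw [h1]; ring
        _ = m (T ×ˢ (univ : Set β)) * (m (e k₀ ×ˢ C) * m (e k ×ˢ (univ : Set β))) := by
            rw [h2]
        _ = (m (T ×ˢ (univ : Set β)) * m (e k₀ ×ˢ C)) * m (e k ×ˢ (univ : Set β)) := by ring
    exact (ENNReal.mul_left_inj (hw0 k) (measure_ne_top m _)).mp key
  obtain ⟨f, hf⟩ := exists_surjective_nat ι'
  set g : ℕ → Set α := fun n => HA ∩ e (f n) with hg
  set d : ℕ → Set α := disjointed g with hd
  have hd_meas : ∀ n, MeasurableSet (d n) :=
    MeasurableSet.disjointed (fun n => hHA.inter (he (f n)))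
  have hd_dis : Pairwise (Function.onFun Disjoint d) := disjoint_disjointed g
  have hd_sub : ∀ n, d n ⊆ e (f n) := fun n =>
    (disjointed_subset g n).trans Set.inter_subset_right
  have hUnion : (⋃ n, d n) = HA := by
    rw [hd, iUnion_disjointed, hg, ← Set.inter_iUnion]
    refine Set.inter_eq_left.mpr fun x hx => ?_
    obtain ⟨k, hk⟩ := Set.mem_iUnion.mp (hsub hx)
    obtain ⟨n, rfl⟩ := hf k
    exact Set.mem_iUnion.mpr ⟨n, hk⟩
  have hsum : ∀ (C : Set β), MeasurableSet C → m (HA ×ˢ C) = ∑' n, m (d n ×ˢ C) := by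
    intro C hc
    rw [← hUnion, Set.iUnion_prod_const, measure_iUnion
      (fun i j hij => Set.Disjoint.set_prod_left (hd_dis hij) _ _) (fun n => (hd_meas n).prod hc)]
  rw [hsum HC hHC, hsum univ MeasurableSet.univ, ← ENNReal.tsum_mul_right,
    ← ENNReal.tsum_mul_right]
  exact tsum_congr fun n => A3 (f n) (d n) (hd_meas n) (hd_sub n) HC hHC


def KK (ι : Type*) : Set (ι → ℝ) := {x | ∀ i, 0 ≤ x i}
def A2 (ι : Type*) : Set (ι → ℝ) := KK ι \ box1 ι
def ee (ι : Type*) (k : ι) : Set (ι → ℝ) := {x | 1 < x k}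

lemma box1_sub_KK (ι : Type*) : box1 ι ⊆ KK ι := fun x hx i => (hx i).1

lemma A2_sub_KK (ι : Type*) : A2 ι ⊆ KK ι := fun _ hx => hx.1

lemma disjoint_box1_A2 (ι : Type*) : Disjoint (box1 ι) (A2 ι) := disjoint_sdiff_self_right

lemma A2_sub_union (ι : Type*) : A2 ι ⊆ ⋃ k, ee ι k := by
  rintro x ⟨hK, hB⟩
  simp only [box1, Set.mem_setOf_eq, Set.mem_Icc, not_forall] at hB
  obtain ⟨k, hk⟩ := hB
  refine Set.mem_iUnion.mpr ⟨k, ?_⟩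
  have : ¬ x k ≤ 1 := fun h => hk ⟨hK k, h⟩
  exact lt_of_not_ge this

lemma omEH_eq (ιA ιC : Type*) :
    omEH ιA ιC = (box1 ιA ×ˢ A2 ιC) ∪ (A2 ιA ×ˢ KK ιC) := by
  ext p
  constructor
  · rintro ⟨⟨h1, h2⟩, hnb⟩
    by_cases hb : p.1 ∈ box1 ιA
    · exact Or.inl ⟨hb, h2, fun hc => hnb ⟨hb, hc⟩⟩
    · exact Or.inr ⟨⟨h1, hb⟩, h2⟩
  · rintro (⟨hb, hK, hnb⟩ | ⟨⟨hK, hnb⟩, h2⟩)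
    · exact ⟨⟨box1_sub_KK ιA hb, hK⟩, fun hc => hnb hc.2⟩
    · exact ⟨⟨hK, h2⟩, fun hc => hnb hc.1⟩

lemma rect_inter_om {ιA ιC : Type*} (HA : Set (ιA → ℝ)) (HC : Set (ιC → ℝ)) :
    (HA ×ˢ HC) ∩ omEH ιA ιC =
      ((HA ∩ box1 ιA) ×ˢ (HC ∩ A2 ιC)) ∪ ((HA ∩ A2 ιA) ×ˢ (HC ∩ KK ιC)) := by
  rw [omEH_eq, Set.inter_union_distrib_left, Set.prod_inter_prod, Set.prod_inter_prod]

lemma nu_main {ιA ιC : Type} [Countable ιA] [Countable ιC] [Nonempty ιA] [Nonempty ιC]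
    (ν : Measure ((ιA → ℝ) × (ιC → ℝ))) [IsProbabilityMeasure ν]
    (hnull : ν (omEH ιA ιC)ᶜ = 0)
    (hop : ∀ U, IsOpen U → (U ∩ omEH ιA ιC).Nonempty → 0 < ν U)
    (hfA : ∀ (k : ιA) (T : Set (ιA → ℝ)), MeasurableSet T → T ⊆ ee ιA k →
      ∀ (C : Set (ιC → ℝ)), MeasurableSet C →
      ν (T ×ˢ C) * ν (ee ιA k ×ˢ univ) = ν (T ×ˢ univ) * ν (ee ιA k ×ˢ C))
    (hfC : ∀ (k : ιC) (T : Set (ιC → ℝ)), MeasurableSet T → T ⊆ ee ιC k →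
      ∀ (C : Set (ιA → ℝ)), MeasurableSet C →
      ν (C ×ˢ T) * ν (univ ×ˢ ee ιC k) = ν (univ ×ˢ T) * ν (C ×ˢ ee ιC k)) :
    ∃ (αm : Measure (ιA → ℝ)) (γm : Measure (ιC → ℝ)),
      IsProbabilityMeasure αm ∧ IsProbabilityMeasure γm ∧
      αm (KK ιA) = 1 ∧ γm (KK ιC) = 1 ∧
      (αm.prod γm)[|omEH ιA ιC] = ν := by
  classical
  have hOMm : MeasurableSet (omEH ιA ιC) := measSet_omEH
  obtain ⟨k₀⟩ := ‹Nonempty ιA›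
  obtain ⟨k₁⟩ := ‹Nonempty ιC›
  have fin : ∀ S : Set ((ιA → ℝ) × (ιC → ℝ)), ν S ≠ ∞ := fun S => measure_ne_top ν S
  have meE : ∀ k : ιA, MeasurableSet (ee ιA k) := fun k =>
    measurableSet_lt measurable_const (measurable_pi_apply k)
  have meF : ∀ k : ιC, MeasurableSet (ee ιC k) := fun k =>
    measurableSet_lt measurable_const (measurable_pi_apply k)
  have mKA : MeasurableSet (KK ιA) := measSet_nonneg
  have mKC : MeasurableSet (KK ιC) := measSet_nonneg
  have mBA : MeasurableSet (box1 ιA) := measSet_box1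
  have mBC : MeasurableSet (box1 ιC) := measSet_box1
  have mA2A : MeasurableSet (A2 ιA) := mKA.diff mBA
  have mA2C : MeasurableSet (A2 ιC) := mKC.diff mBC
  -- every set has full measure inside omEH
  have nuI : ∀ T : Set ((ιA → ℝ) × (ιC → ℝ)), ν T = ν (T ∩ omEH ιA ιC) := by
    intro T
    have h1 : ν (T ∩ omEH ιA ιC) + ν (T \ omEH ιA ιC) = ν T := measure_inter_add_diff T hOMm
    have h2 : ν (T \ omEH ιA ιC) = 0 :=
      measure_mono_null (fun x hx => hx.2) hnull
    rw [h2, add_zero] at h1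
    exact h1.symm
  -- positivity facts
  have isOpenE : ∀ k : ιA, IsOpen (ee ιA k) := fun k =>
    isOpen_lt continuous_const (continuous_apply k)
  have isOpenF : ∀ k : ιC, IsOpen (ee ιC k) := fun k =>
    isOpen_lt continuous_const (continuous_apply k)
  have posEE : ∀ k j : ιA, ν ((ee ιA k ∩ ee ιA j) ×ˢ (univ : Set (ιC → ℝ))) ≠ 0 := by
    intro k j
    refine (hop _ (((isOpenE k).inter (isOpenE j)).prod isOpen_univ) ?_).ne'
    refine ⟨(fun i => if i = k ∨ i = j then 2 else 0, fun _ => 0), ⟨⟨?_, ?_⟩, trivial⟩, ?_, ?_⟩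
    · simp only [ee, Set.mem_setOf_eq, if_pos (Or.inl rfl)]; norm_num
    · simp only [ee, Set.mem_setOf_eq, if_pos (Or.inr rfl)]; norm_num
    · constructor
      · intro i; dsimp only; split <;> norm_num
      · intro i; dsimp only; norm_num
    · rintro ⟨hb, -⟩
      have h := hb k
      simp only [Set.mem_Icc, eq_self_iff_true, true_or, if_true] at h
      linarith [h.2]
  have posFF : ∀ k j : ιC, ν ((univ : Set (ιA → ℝ)) ×ˢ (ee ιC k ∩ ee ιC j)) ≠ 0 := by
    intro k j
    refine (hop _ (isOpen_univ.prod ((isOpenF k).inter (isOpenF j))) ?_).ne'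
    refine ⟨(fun _ => 0, fun i => if i = k ∨ i = j then 2 else 0), ⟨trivial, ?_, ?_⟩, ?_, ?_⟩
    · simp only [ee, Set.mem_setOf_eq, if_pos (Or.inl rfl)]; norm_num
    · simp only [ee, Set.mem_setOf_eq, if_pos (Or.inr rfl)]; norm_num
    · constructor
      · intro i; dsimp only; norm_num
      · intro i; dsimp only; split <;> norm_num
    · rintro ⟨-, hb⟩
      have h := hb k
      simp only [Set.mem_Icc, eq_self_iff_true, true_or, if_true] at h
      linarith [h.2]
  have posEF : ν (ee ιA k₀ ×ˢ ee ιC k₁) ≠ 0 := by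
    refine (hop _ ((isOpenE k₀).prod (isOpenF k₁)) ?_).ne'
    refine ⟨(fun i => if i = k₀ then 2 else 0, fun j => if j = k₁ then 2 else 0),
      ⟨?_, ?_⟩, ?_, ?_⟩
    · simp only [ee, Set.mem_setOf_eq, if_pos rfl]; norm_num
    · simp only [ee, Set.mem_setOf_eq, if_pos rfl]; norm_num
    · constructor
      · intro i; dsimp only; split <;> norm_num
      · intro i; dsimp only; split <;> norm_num
    · rintro ⟨hb, -⟩
      have h := hb k₀
      simp only [Set.mem_Icc, eq_self_iff_true, if_true] at h
      linarith [h.2]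
  have posAf : ν (A2 ιA ×ˢ ee ιC k₁) ≠ 0 := by
    intro hcon
    apply posEF
    have hsub : (ee ιA k₀ ×ˢ ee ιC k₁) ∩ omEH ιA ιC ⊆ A2 ιA ×ˢ ee ιC k₁ := by
      rintro p ⟨⟨h1, h2⟩, ⟨hK, -⟩, hnb⟩
      refine ⟨⟨hK, fun hb => ?_⟩, h2⟩
      have := (hb k₀).2
      exact absurd h1 (by simp only [ee, Set.mem_setOf_eq]; linarith)
    rw [nuI (ee ιA k₀ ×ˢ ee ιC k₁)]
    exact measure_mono_null hsub hcon
  -- abbreviations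
  set w₀ := ν (ee ιA k₀ ×ˢ (univ : Set (ιC → ℝ))) with hw₀def
  set w₁ := ν ((univ : Set (ιA → ℝ)) ×ˢ ee ιC k₁) with hw₁def
  have hw₀ : w₀ ≠ 0 := by
    have := posEE k₀ k₀; rwa [Set.inter_self] at this
  have hw₁ : w₁ ≠ 0 := by
    have := posFF k₁ k₁; rwa [Set.inter_self] at this
  have hw₀t : w₀ ≠ ∞ := fin _
  have hw₁t : w₁ ≠ ∞ := fin _
  -- Step A
  have SA : ∀ (T : Set (ιA → ℝ)), MeasurableSet T → T ⊆ ⋃ k, ee ιA k →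
      ∀ (C : Set (ιC → ℝ)), MeasurableSet C →
      ν (T ×ˢ C) * w₀ = ν (T ×ˢ univ) * ν (ee ιA k₀ ×ˢ C) := by
    intro T hT hTsub C hc
    exact key_factor ν (ee ιA) meE posEE hfA k₀ hT hc hTsub
  -- Step B via swapping
  have SB : ∀ (T : Set (ιC → ℝ)), MeasurableSet T → T ⊆ ⋃ k, ee ιC k →
      ∀ (C : Set (ιA → ℝ)), MeasurableSet C →
      ν (C ×ˢ T) * w₁ = ν (univ ×ˢ T) * ν (C ×ˢ ee ιC k₁) := by
    intro T hT hTsub C hc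
    set msw := ν.map Prod.swap with hmsw
    haveI : IsProbabilityMeasure msw := Measure.isProbabilityMeasure_map measurable_swap.aemeasurable
    have mswv : ∀ (S : Set (ιC → ℝ)) (S' : Set (ιA → ℝ)), MeasurableSet S → MeasurableSet S' →
        msw (S ×ˢ S') = ν (S' ×ˢ S) := by
      intro S S' hS hS'
      rw [hmsw, Measure.map_apply measurable_swap (hS.prod hS'), Set.preimage_swap_prod]
    have hpos' : ∀ k j : ιC, msw ((ee ιC k ∩ ee ιC j) ×ˢ (univ : Set (ιA → ℝ))) ≠ 0 := by
      intro k j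
      rw [mswv _ _ ((meF k).inter (meF j)) MeasurableSet.univ]
      exact posFF k j
    have hfact' : ∀ (k : ιC) (T' : Set (ιC → ℝ)), MeasurableSet T' → T' ⊆ ee ιC k →
        ∀ (C' : Set (ιA → ℝ)), MeasurableSet C' →
        msw (T' ×ˢ C') * msw (ee ιC k ×ˢ univ) = msw (T' ×ˢ univ) * msw (ee ιC k ×ˢ C') := by
      intro k T' hT' hsub' C' hc'
      rw [mswv _ _ hT' hc', mswv _ _ (meF k) MeasurableSet.univ,
        mswv _ _ hT' MeasurableSet.univ, mswv _ _ (meF k) hc']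
      exact hfC k T' hT' hsub' C' hc'
    have h := key_factor msw (ee ιC) meF hpos' hfact' k₁ hT hc hTsub
    rw [mswv _ _ hT hc, mswv _ _ (meF k₁) MeasurableSet.univ, mswv _ _ hT MeasurableSet.univ,
      mswv _ _ (meF k₁) hc] at h
    exact h
  -- scalar identity (II)
  have hII : ∀ (T : Set (ιA → ℝ)), MeasurableSet T → T ⊆ A2 ιA →
      ∀ (C : Set (ιC → ℝ)), MeasurableSet C →
      ν (T ×ˢ C) = ν (T ×ˢ univ) * (w₀⁻¹ * ν (ee ιA k₀ ×ˢ C)) := by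
    intro T hT hTsub C hc
    have h := SA T hT (hTsub.trans (A2_sub_union ιA)) C hc
    refine (ENNReal.mul_left_inj hw₀ hw₀t).mp ?_
    rw [h, show ν (T ×ˢ univ) * (w₀⁻¹ * ν (ee ιA k₀ ×ˢ C)) * w₀
      = (w₀⁻¹ * w₀) * (ν (T ×ˢ univ) * ν (ee ιA k₀ ×ˢ C)) from by ring,
      ENNReal.inv_mul_cancel hw₀ hw₀t, one_mul]
  -- scalar identity (I)
  have hI : ∀ (T : Set (ιA → ℝ)), MeasurableSet T → T ⊆ box1 ιA →
      ∀ (C : Set (ιC → ℝ)), MeasurableSet C → C ⊆ A2 ιC →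
      ν (T ×ˢ C) = (ν (A2 ιA ×ˢ (univ : Set (ιC → ℝ))) * (ν (A2 ιA ×ˢ ee ιC k₁))⁻¹
          * ν (T ×ˢ ee ιC k₁)) * (w₀⁻¹ * ν (ee ιA k₀ ×ˢ C)) := by
    intro T hT hTB C hc hCsub
    have hCu : C ⊆ ⋃ k, ee ιC k := hCsub.trans (A2_sub_union ιC)
    have h1 := SB C hc hCu T hT
    have h2 := SB C hc hCu (A2 ιA) mA2A
    have h3 := SA (A2 ιA) mA2A (A2_sub_union ιA) C hc
    have hq : ν (A2 ιA ×ˢ ee ιC k₁) ≠ 0 := posAf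
    have hqt : ν (A2 ιA ×ˢ ee ιC k₁) ≠ ∞ := fin _
    have hz0 : w₁ * (ν (A2 ιA ×ˢ ee ιC k₁) * w₀) ≠ 0 :=
      mul_ne_zero hw₁ (mul_ne_zero hq hw₀)
    have hzt : w₁ * (ν (A2 ιA ×ˢ ee ιC k₁) * w₀) ≠ ∞ :=
      ENNReal.mul_ne_top hw₁t (ENNReal.mul_ne_top hqt hw₀t)
    refine (ENNReal.mul_left_inj hz0 hzt).mp ?_
    have hcq : (ν (A2 ιA ×ˢ ee ιC k₁))⁻¹ * ν (A2 ιA ×ˢ ee ιC k₁) = 1 :=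
      ENNReal.inv_mul_cancel hq hqt
    have hcw : w₀⁻¹ * w₀ = 1 := ENNReal.inv_mul_cancel hw₀ hw₀t
    calc ν (T ×ˢ C) * (w₁ * (ν (A2 ιA ×ˢ ee ιC k₁) * w₀))
        = ν (T ×ˢ C) * w₁ * ν (A2 ιA ×ˢ ee ιC k₁) * w₀ := by ring
      _ = ν (univ ×ˢ C) * ν (T ×ˢ ee ιC k₁) * ν (A2 ιA ×ˢ ee ιC k₁) * w₀ := by rw [h1]
      _ = ν (univ ×ˢ C) * ν (A2 ιA ×ˢ ee ιC k₁) * w₀ * ν (T ×ˢ ee ιC k₁) := by ring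
      _ = ν (A2 ιA ×ˢ C) * w₁ * w₀ * ν (T ×ˢ ee ιC k₁) := by rw [← h2]
      _ = ν (A2 ιA ×ˢ C) * w₀ * w₁ * ν (T ×ˢ ee ιC k₁) := by ring
      _ = ν (A2 ιA ×ˢ univ) * ν (ee ιA k₀ ×ˢ C) * w₁ * ν (T ×ˢ ee ιC k₁) := by rw [h3]
      _ = ν (A2 ιA ×ˢ (univ : Set (ιC → ℝ))) * (ν (A2 ιA ×ˢ ee ιC k₁))⁻¹ * ν (T ×ˢ ee ιC k₁)
            * (w₀⁻¹ * ν (ee ιA k₀ ×ˢ C)) * (w₁ * (ν (A2 ιA ×ˢ ee ιC k₁) * w₀)) := by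
          rw [show ν (A2 ιA ×ˢ (univ : Set (ιC → ℝ))) * (ν (A2 ιA ×ˢ ee ιC k₁))⁻¹
              * ν (T ×ˢ ee ιC k₁) * (w₀⁻¹ * ν (ee ιA k₀ ×ˢ C))
              * (w₁ * (ν (A2 ιA ×ˢ ee ιC k₁) * w₀))
            = ((ν (A2 ιA ×ˢ ee ιC k₁))⁻¹ * ν (A2 ιA ×ˢ ee ιC k₁)) * ((w₀⁻¹ * w₀)
              * (ν (A2 ιA ×ˢ univ) * ν (ee ιA k₀ ×ˢ C) * w₁ * ν (T ×ˢ ee ιC k₁))) from by ring,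
            hcq, hcw, one_mul, one_mul]
  -- the C-side measure
  set γm : Measure (ιC → ℝ) := w₀⁻¹ • ((ν.restrict (ee ιA k₀ ×ˢ univ)).map Prod.snd) with hγdef
  have hγ : ∀ (C : Set (ιC → ℝ)), MeasurableSet C → γm C = w₀⁻¹ * ν (ee ιA k₀ ×ˢ C) := by
    intro C hc
    have hset : Prod.snd ⁻¹' C ∩ (ee ιA k₀ ×ˢ (univ : Set (ιC → ℝ))) = ee ιA k₀ ×ˢ C := by
      ext p
      simp only [Set.mem_inter_iff, Set.mem_preimage, Set.mem_prod, Set.mem_univ, and_true]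
      exact and_comm
    rw [hγdef, Measure.smul_apply, Measure.map_apply measurable_snd hc,
      Measure.restrict_apply (measurable_snd hc), hset, smul_eq_mul]
  haveI hγprob : IsProbabilityMeasure γm := ⟨by
    rw [hγ univ MeasurableSet.univ]
    exact ENNReal.inv_mul_cancel hw₀ hw₀t⟩
  -- the A-side (unnormalised) measure
  set c := ν (A2 ιA ×ˢ (univ : Set (ιC → ℝ))) * (ν (A2 ιA ×ˢ ee ιC k₁))⁻¹ with hcdef
  have hct : c ≠ ∞ := ENNReal.mul_ne_top (fin _) (ENNReal.inv_ne_top.mpr posAf)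
  set αraw : Measure (ιA → ℝ) :=
    (ν.map Prod.fst).restrict (A2 ιA) +
      c • (((ν.restrict ((univ : Set (ιA → ℝ)) ×ˢ ee ιC k₁)).map Prod.fst).restrict (box1 ιA))
    with hαdef
  have hα : ∀ (T : Set (ιA → ℝ)), MeasurableSet T →
      αraw T = ν ((T ∩ A2 ιA) ×ˢ univ) + c * ν ((T ∩ box1 ιA) ×ˢ ee ιC k₁) := by
    intro T hT
    have hset1 : Prod.fst ⁻¹' (T ∩ A2 ιA) = (T ∩ A2 ιA) ×ˢ (univ : Set (ιC → ℝ)) := by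
      ext p; simp [Set.mem_prod]
    have hset2 : Prod.fst ⁻¹' (T ∩ box1 ιA) ∩ ((univ : Set (ιA → ℝ)) ×ˢ ee ιC k₁)
        = (T ∩ box1 ιA) ×ˢ ee ιC k₁ := by
      ext p; simp [Set.mem_prod]
    rw [hαdef, Measure.add_apply, Measure.restrict_apply hT, Measure.smul_apply,
      Measure.restrict_apply hT,
      Measure.map_apply measurable_fst (hT.inter mA2A),
      Measure.map_apply measurable_fst (hT.inter mBA),
      Measure.restrict_apply (measurable_fst (hT.inter mBA)),
      hset1, hset2, smul_eq_mul]
  haveI : IsFiniteMeasure αraw := ⟨by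
    rw [hα univ MeasurableSet.univ]
    exact lt_top_iff_ne_top.mpr (ENNReal.add_ne_top.mpr ⟨fin _, ENNReal.mul_ne_top hct (fin _)⟩)⟩
  -- rectangle computation
  have rect : ∀ (HA : Set (ιA → ℝ)), MeasurableSet HA → ∀ (HC : Set (ιC → ℝ)), MeasurableSet HC →
      (αraw.prod γm) ((HA ×ˢ HC) ∩ omEH ιA ιC) = ν (HA ×ˢ HC) := by
    intro HA hHA HC hHC
    have hdis : Disjoint ((HA ∩ box1 ιA) ×ˢ (HC ∩ A2 ιC)) ((HA ∩ A2 ιA) ×ˢ (HC ∩ KK ιC)) :=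
      Set.Disjoint.set_prod_left
        ((disjoint_box1_A2 ιA).mono Set.inter_subset_right Set.inter_subset_right) _ _
    have hmeas2 : MeasurableSet ((HA ∩ A2 ιA) ×ˢ (HC ∩ KK ιC)) :=
      (hHA.inter mA2A).prod (hHC.inter mKC)
    have hBA2 : (HA ∩ box1 ιA) ∩ A2 ιA = ∅ := by
      rw [Set.inter_assoc, (disjoint_box1_A2 ιA).inter_eq, Set.inter_empty]
    have hBB : (HA ∩ box1 ιA) ∩ box1 ιA = HA ∩ box1 ιA := by
      rw [Set.inter_assoc, Set.inter_self]
    have hA2B : (HA ∩ A2 ιA) ∩ box1 ιA = ∅ := by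
      ext x
      simp only [Set.mem_inter_iff, Set.mem_empty_iff_false, iff_false]
      rintro ⟨⟨-, hA2⟩, hB⟩
      exact (disjoint_box1_A2 ιA).le_bot ⟨hB, hA2⟩
    have hA2A2 : (HA ∩ A2 ιA) ∩ A2 ιA = HA ∩ A2 ιA := by rw [Set.inter_assoc, Set.inter_self]
    calc (αraw.prod γm) ((HA ×ˢ HC) ∩ omEH ιA ιC)
        = (αraw.prod γm) (((HA ∩ box1 ιA) ×ˢ (HC ∩ A2 ιC)) ∪ ((HA ∩ A2 ιA) ×ˢ (HC ∩ KK ιC))) := by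
          rw [rect_inter_om]
      _ = αraw (HA ∩ box1 ιA) * γm (HC ∩ A2 ιC) + αraw (HA ∩ A2 ιA) * γm (HC ∩ KK ιC) := by
          rw [measure_union hdis hmeas2, Measure.prod_prod, Measure.prod_prod]
      _ = (c * ν ((HA ∩ box1 ιA) ×ˢ ee ιC k₁)) * (w₀⁻¹ * ν (ee ιA k₀ ×ˢ (HC ∩ A2 ιC)))
            + ν ((HA ∩ A2 ιA) ×ˢ univ) * (w₀⁻¹ * ν (ee ιA k₀ ×ˢ (HC ∩ KK ιC))) := by
          rw [hα _ (hHA.inter mBA), hα _ (hHA.inter mA2A), hγ _ (hHC.inter mA2C),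
            hγ _ (hHC.inter mKC), hBA2, hBB, hA2B, hA2A2]
          simp
      _ = ν ((HA ∩ box1 ιA) ×ˢ (HC ∩ A2 ιC)) + ν ((HA ∩ A2 ιA) ×ˢ (HC ∩ KK ιC)) := by
          rw [← hI _ (hHA.inter mBA) Set.inter_subset_right _ (hHC.inter mA2C)
              Set.inter_subset_right,
            ← hII _ (hHA.inter mA2A) Set.inter_subset_right _ (hHC.inter mKC)]
      _ = ν ((HA ×ˢ HC) ∩ omEH ιA ιC) := by
          rw [rect_inter_om, measure_union hdis hmeas2]
      _ = ν (HA ×ˢ HC) := (nuI _).symm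
  -- measure-level identification
  have restrict_eq : (αraw.prod γm).restrict (omEH ιA ιC) = ν := by
    refine MeasureTheory.ext_of_generate_finite
      (Set.image2 (· ×ˢ ·) {s : Set (ιA → ℝ) | MeasurableSet s} {t : Set (ιC → ℝ) | MeasurableSet t})
      generateFrom_prod.symm isPiSystem_prod ?_ ?_
    · rintro s ⟨HA, hHA, HC, hHC, rfl⟩
      simp only [Set.mem_setOf_eq] at hHA hHC
      rw [Measure.restrict_apply (hHA.prod hHC)]
      exact rect HA hHA HC hHC
    · rw [Measure.restrict_apply MeasurableSet.univ, Set.univ_inter,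
        show omEH ιA ιC = ((univ : Set (ιA → ℝ)) ×ˢ (univ : Set (ιC → ℝ))) ∩ omEH ιA ιC from by
          rw [Set.univ_prod_univ, Set.univ_inter],
        rect univ MeasurableSet.univ univ MeasurableSet.univ, Set.univ_prod_univ]
  -- normalisation
  have hαuniv : αraw univ = ν (A2 ιA ×ˢ univ) + c * ν (box1 ιA ×ˢ ee ιC k₁) := by
    rw [hα univ MeasurableSet.univ, Set.univ_inter, Set.univ_inter]
  have ha0 : ν (A2 ιA ×ˢ (univ : Set (ιC → ℝ))) ≠ 0 := by
    intro hc
    exact posAf (measure_mono_null (Set.prod_mono_right (Set.subset_univ _)) hc)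
  have ht0 : αraw univ ≠ 0 := by
    rw [hαuniv]
    intro hc
    exact ha0 (add_eq_zero.mp hc).1
  have htt : αraw univ ≠ ∞ := measure_ne_top αraw univ
  set αm : Measure (ιA → ℝ) := (αraw univ)⁻¹ • αraw with hαmdef
  haveI hαprob : IsProbabilityMeasure αm := ⟨by
    rw [hαmdef, Measure.smul_apply, smul_eq_mul, ENNReal.inv_mul_cancel ht0 htt]⟩
  have hsmul : (αraw univ)⁻¹ • (αraw.prod γm) = αm.prod γm := by
    refine (Measure.prod_eq fun s u hs hu => ?_).symm
    simp only [hαmdef, Measure.smul_apply, Measure.prod_prod, smul_eq_mul]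
    ring
  have hαK : αm (KK ιA) = 1 := by
    have hinter1 : (KK ιA)ᶜ ∩ A2 ιA = ∅ := by
      ext x
      simp only [Set.mem_inter_iff, Set.mem_compl_iff, Set.mem_empty_iff_false, iff_false]
      rintro ⟨hx, hA2⟩
      exact hx (A2_sub_KK ιA hA2)
    have hinter2 : (KK ιA)ᶜ ∩ box1 ιA = ∅ := by
      ext x
      simp only [Set.mem_inter_iff, Set.mem_compl_iff, Set.mem_empty_iff_false, iff_false]
      rintro ⟨hx, hB⟩
      exact hx (box1_sub_KK ιA hB)
    have h0 : αraw (KK ιA)ᶜ = 0 := by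
      rw [hα _ mKA.compl, hinter1, hinter2]
      simp
    have hcompl : αraw (KK ιA) = αraw univ := by
      have h := measure_add_measure_compl (μ := αraw) mKA
      rw [h0, add_zero] at h
      exact h
    rw [hαmdef, Measure.smul_apply, hcompl, smul_eq_mul, ENNReal.inv_mul_cancel ht0 htt]
  have hγK : γm (KK ιC) = 1 := by
    have h0 : ν (ee ιA k₀ ×ˢ (KK ιC)ᶜ) = 0 := by
      refine measure_mono_null ?_ hnull
      rintro p ⟨-, h2⟩
      intro hOm
      exact h2 hOm.1.2
    have h1 : γm ((KK ιC)ᶜ) = 0 := by rw [hγ _ mKC.compl, h0, mul_zero]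
    have h := measure_add_measure_compl (μ := γm) mKC
    rw [h1, add_zero, measure_univ] at h
    exact h
  -- conditioning
  have hOMval : ∀ (S : Set ((ιA → ℝ) × (ιC → ℝ))), MeasurableSet S →
      (αm.prod γm) (S ∩ omEH ιA ιC) = (αraw univ)⁻¹ * ν S := by
    intro S hS
    rw [← hsmul, Measure.smul_apply, smul_eq_mul]
    congr 1
    rw [← Measure.restrict_apply hS, restrict_eq]
  have final : (αm.prod γm)[|omEH ιA ιC] = ν := by
    ext S hS
    rw [cond_apply' hS]
    have hPOM : (αm.prod γm) (omEH ιA ιC) = (αraw univ)⁻¹ := by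
      have h := hOMval univ MeasurableSet.univ
      rwa [Set.univ_inter, measure_univ (μ := ν), mul_one] at h
    rw [Set.inter_comm (omEH ιA ιC) S, hOMval S hS, hPOM, inv_inv, ← mul_assoc,
      ENNReal.mul_inv_cancel ht0 htt, one_mul]
  exact ⟨αm, γm, hαprob, hγprob, hαK, hγK, final⟩

-- preimage identities
lemma preAC {Ω₀ ιA ιC : Type} (YA : Ω₀ → ιA → ℝ) (YC : Ω₀ → ιC → ℝ)
    (HA : Set (ιA → ℝ)) (HC : Set (ιC → ℝ)) :
    YA ⁻¹' HA ∩ YC ⁻¹' HC = (fun ω => (YA ω, YC ω)) ⁻¹' (HA ×ˢ HC) := by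
  ext ω; simp [Set.mem_prod]

lemma preA {Ω₀ ιA ιC : Type} (YA : Ω₀ → ιA → ℝ) (YC : Ω₀ → ιC → ℝ) (HA : Set (ιA → ℝ)) :
    YA ⁻¹' HA = (fun ω => (YA ω, YC ω)) ⁻¹' (HA ×ˢ (univ : Set (ιC → ℝ))) := by
  ext ω; simp [Set.mem_prod]

lemma preC {Ω₀ ιA ιC : Type} (YA : Ω₀ → ιA → ℝ) (YC : Ω₀ → ιC → ℝ) (HC : Set (ιC → ℝ)) :
    YC ⁻¹' HC = (fun ω => (YA ω, YC ω)) ⁻¹' ((univ : Set (ιA → ℝ)) ×ˢ HC) := by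
  ext ω; simp [Set.mem_prod]

lemma eventA {Ω₀ ιA ιC : Type} (YA : Ω₀ → ιA → ℝ) (YC : Ω₀ → ιC → ℝ) (k : ιA) :
    {ω | 1 < YA ω k} = (fun ω => (YA ω, YC ω)) ⁻¹' (ee ιA k ×ˢ (univ : Set (ιC → ℝ))) := by
  ext ω; simp [ee, Set.mem_prod]

lemma eventC {Ω₀ ιA ιC : Type} (YA : Ω₀ → ιA → ℝ) (YC : Ω₀ → ιC → ℝ) (k : ιC) :
    {ω | 1 < YC ω k} = (fun ω => (YA ω, YC ω)) ⁻¹' ((univ : Set (ιA → ℝ)) ×ˢ ee ιC k) := by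
  ext ω; simp [ee, Set.mem_prod]

-- positivity helpers
lemma pos_e_univ {ιA ιC : Type} (ν : Measure ((ιA → ℝ) × (ιC → ℝ)))
    (hop : ∀ U, IsOpen U → (U ∩ omEH ιA ιC).Nonempty → 0 < ν U) (k : ιA) :
    ν (ee ιA k ×ˢ (univ : Set (ιC → ℝ))) ≠ 0 := by
  classical
  refine (hop _ ((isOpen_lt continuous_const (continuous_apply k)).prod isOpen_univ) ?_).ne'
  refine ⟨(fun i => if i = k then 2 else 0, fun _ => 0), ⟨?_, trivial⟩, ?_, ?_⟩
  · simp only [ee, Set.mem_setOf_eq, if_pos rfl]; norm_num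
  · constructor
    · intro i; dsimp only; split <;> norm_num
    · intro i; dsimp only; norm_num
  · rintro ⟨hb, -⟩
    have h := hb k
    simp only [Set.mem_Icc, eq_self_iff_true, if_true] at h
    linarith [h.2]

lemma pos_univ_f {ιA ιC : Type} (ν : Measure ((ιA → ℝ) × (ιC → ℝ)))
    (hop : ∀ U, IsOpen U → (U ∩ omEH ιA ιC).Nonempty → 0 < ν U) (k : ιC) :
    ν ((univ : Set (ιA → ℝ)) ×ˢ ee ιC k) ≠ 0 := by
  classical
  refine (hop _ (isOpen_univ.prod (isOpen_lt continuous_const (continuous_apply k))) ?_).ne'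
  refine ⟨(fun _ => 0, fun i => if i = k then 2 else 0), ⟨trivial, ?_⟩, ?_, ?_⟩
  · simp only [ee, Set.mem_setOf_eq, if_pos rfl]; norm_num
  · constructor
    · intro i; dsimp only; norm_num
    · intro i; dsimp only; split <;> norm_num
  · rintro ⟨-, hb⟩
    have h := hb k
    simp only [Set.mem_Icc, eq_self_iff_true, if_true] at h
    linarith [h.2]

lemma nu_inter {ιA ιC : Type} [Countable ιA] [Countable ιC]
    (ν : Measure ((ιA → ℝ) × (ιC → ℝ))) (hnull : ν (omEH ιA ιC)ᶜ = 0)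
    (T : Set ((ιA → ℝ) × (ιC → ℝ))) : ν T = ν (T ∩ omEH ιA ιC) := by
  have h1 : ν (T ∩ omEH ιA ιC) + ν (T \ omEH ιA ιC) = ν T := measure_inter_add_diff T measSet_omEH
  have h2 : ν (T \ omEH ιA ιC) = 0 := measure_mono_null (fun x hx => hx.2) hnull
  rw [h2, add_zero] at h1
  exact h1.symm

-- scalar algebra for outer → inner
lemma outer_alg {D a b aH bH : ℝ≥0∞} (hD0 : D ≠ 0) (hDt : D ≠ ∞)
    (ha : a ≠ 0) (hat : a ≠ ∞) (hb : b ≠ 0) (hbt : b ≠ ∞) :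
    (D⁻¹ * (a * b))⁻¹ * (D⁻¹ * (aH * bH)) =
      ((D⁻¹ * (a * b))⁻¹ * (D⁻¹ * (aH * b))) * ((D⁻¹ * (a * b))⁻¹ * (D⁻¹ * (a * bH))) := by
  have hmi : (D⁻¹ * (a * b))⁻¹ = D * (a⁻¹ * b⁻¹) := by
    rw [ENNReal.mul_inv (Or.inl (ENNReal.inv_ne_zero.mpr hDt))
        (Or.inl (ENNReal.inv_ne_top.mpr hD0)), inv_inv,
      ENNReal.mul_inv (Or.inl ha) (Or.inl hat)]
  have hD : D * D⁻¹ = 1 := ENNReal.mul_inv_cancel hD0 hDt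
  have hA : a * a⁻¹ = 1 := ENNReal.mul_inv_cancel ha hat
  have hB : b * b⁻¹ = 1 := ENNReal.mul_inv_cancel hb hbt
  rw [hmi]
  calc D * (a⁻¹ * b⁻¹) * (D⁻¹ * (aH * bH))
      = (D * D⁻¹) * ((a⁻¹ * aH) * (b⁻¹ * bH)) := by ring
    _ = (a⁻¹ * aH) * (b⁻¹ * bH) := by rw [hD, one_mul]
    _ = ((D * D⁻¹) * (D * D⁻¹) * (a * a⁻¹) * (b * b⁻¹)) * ((a⁻¹ * aH) * (b⁻¹ * bH)) := by
        rw [hD, hA, hB]; ring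
    _ = (D * (a⁻¹ * b⁻¹) * (D⁻¹ * (aH * b))) * (D * (a⁻¹ * b⁻¹) * (D⁻¹ * (a * bH))) := by ring

lemma outer_to_inner {Ω₀ ιA ιC : Type} [MeasurableSpace Ω₀]
    (μ : Measure Ω₀) [IsProbabilityMeasure μ] (YA : Ω₀ → ιA → ℝ) (YC : Ω₀ → ιC → ℝ)
    (hA : Measurable YA) (hC : Measurable YC)
    (hO : OuterIndep μ YA YC (omEH ιA ιC)) : InnerIndep μ YA YC (omEH ιA ιC) := by
  obtain ⟨Ω', mΩ', P, WA, WC, LA, LC, hP, hWA, hWC, hOmsub, hL1, hIndep, hmap⟩ := hO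
  have hY : Measurable fun ω => (YA ω, YC ω) := hA.prodMk hC
  have hW : Measurable fun ω => (WA ω, WC ω) := hWA.prodMk hWC
  haveI : IsProbabilityMeasure (μ.map fun ω => (YA ω, YC ω)) :=
    Measure.isProbabilityMeasure_map hY.aemeasurable
  set ν := μ.map fun ω => (YA ω, YC ω) with hνdef
  set W := fun ω => (WA ω, WC ω) with hWdef
  set D := P (W ⁻¹' omEH ιA ιC) with hDdef
  have hval : ∀ T, MeasurableSet T → ν T = D⁻¹ * P (W ⁻¹' omEH ιA ιC ∩ W ⁻¹' T) := by
    intro T hT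
    rw [← hmap, Measure.map_apply hW hT, cond_apply' (hW hT)]
  have hDt : D ≠ ∞ := measure_ne_top P _
  have hD0 : D ≠ 0 := by
    intro h0
    have h := hval univ MeasurableSet.univ
    rw [measure_univ, Set.preimage_univ, Set.inter_univ, ← hDdef, h0, mul_zero] at h
    exact one_ne_zero h
  have hrect : ∀ TA TC, MeasurableSet TA → MeasurableSet TC → TA ×ˢ TC ⊆ omEH ιA ιC →
      ν (TA ×ˢ TC) = D⁻¹ * (P (WA ⁻¹' TA) * P (WC ⁻¹' TC)) := by
    intro TA TC hTA hTC hsub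
    rw [hval _ (hTA.prod hTC)]
    congr 1
    have hWpre : W ⁻¹' (TA ×ˢ TC) = WA ⁻¹' TA ∩ WC ⁻¹' TC := by
      ext ω; simp [hWdef, Set.mem_prod]
    have hsubOm : W ⁻¹' (TA ×ˢ TC) ⊆ W ⁻¹' omEH ιA ιC := Set.preimage_mono hsub
    rw [Set.inter_eq_right.mpr hsubOm, hWpre]
    exact (indepFun_iff_measure_inter_preimage_eq_mul.mp hIndep) TA TC hTA hTC
  intro SA SC hSA hSC hsub hpos
  have hposν : ν (SA ×ˢ SC) ≠ 0 := by
    rw [hνdef, Measure.map_apply hY (hSA.prod hSC)]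
    exact hpos.ne'
  intro HA HC hHA hHC
  rw [preAC YA YC HA HC, preA YA YC HA, preC YA YC HC,
    cond_map μ hY (hSA.prod hSC) (hHA.prod hHC),
    cond_map μ hY (hSA.prod hSC) (hHA.prod MeasurableSet.univ),
    cond_map μ hY (hSA.prod hSC) (MeasurableSet.univ.prod hHC), ← hνdef,
    cond_apply' (hHA.prod hHC), cond_apply' (hHA.prod MeasurableSet.univ),
    cond_apply' (MeasurableSet.univ.prod hHC)]
  simp only [Set.prod_inter_prod, Set.inter_univ, Set.univ_inter]
  have hsub1 : (SA ∩ HA) ×ˢ (SC ∩ HC) ⊆ omEH ιA ιC :=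
    (Set.prod_mono Set.inter_subset_left Set.inter_subset_left).trans hsub
  have hsub2 : (SA ∩ HA) ×ˢ SC ⊆ omEH ιA ιC :=
    (Set.prod_mono Set.inter_subset_left subset_rfl).trans hsub
  have hsub3 : SA ×ˢ (SC ∩ HC) ⊆ omEH ιA ιC :=
    (Set.prod_mono subset_rfl Set.inter_subset_left).trans hsub
  rw [hrect SA SC hSA hSC hsub, hrect _ _ (hSA.inter hHA) (hSC.inter hHC) hsub1,
    hrect _ _ (hSA.inter hHA) hSC hsub2, hrect _ _ hSA (hSC.inter hHC) hsub3]
  have hab : P (WA ⁻¹' SA) ≠ 0 ∧ P (WC ⁻¹' SC) ≠ 0 := by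
    rw [hrect SA SC hSA hSC hsub] at hposν
    constructor
    · intro h0; rw [h0, zero_mul, mul_zero] at hposν; exact hposν rfl
    · intro h0; rw [h0, mul_zero, mul_zero] at hposν; exact hposν rfl
  exact outer_alg hD0 hDt hab.1 (measure_ne_top P _) hab.2 (measure_ne_top P _)

lemma inner_to_eh {Ω₀ ιA ιC : Type} [MeasurableSpace Ω₀] [Countable ιA] [Countable ιC]
    (μ : Measure Ω₀) [IsProbabilityMeasure μ] (YA : Ω₀ → ιA → ℝ) (YC : Ω₀ → ιC → ℝ)
    (hA : Measurable YA) (hC : Measurable YC)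
    (hsupp : HasSupport (μ.map fun ω => (YA ω, YC ω)) (omEH ιA ιC))
    (hI : InnerIndep μ YA YC (omEH ιA ιC)) : EHIndep μ YA YC := by
  obtain ⟨hnull, hop⟩ := hsupp
  have hY : Measurable fun ω => (YA ω, YC ω) := hA.prodMk hC
  set ν := μ.map fun ω => (YA ω, YC ω) with hνdef
  have meE : ∀ k : ιA, MeasurableSet (ee ιA k) := fun k =>
    measurableSet_lt measurable_const (measurable_pi_apply k)
  have meF : ∀ k : ιC, MeasurableSet (ee ιC k) := fun k =>
    measurableSet_lt measurable_const (measurable_pi_apply k)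
  have mKA : MeasurableSet (KK ιA) := measSet_nonneg
  have mKC : MeasurableSet (KK ιC) := measSet_nonneg
  have hmunull : ∀ N : Set ((ιA → ℝ) × (ιC → ℝ)), N ⊆ (omEH ιA ιC)ᶜ → MeasurableSet N →
      μ ((fun ω => (YA ω, YC ω)) ⁻¹' N) = 0 := by
    intro N hNsub hNm
    rw [← Measure.map_apply hY hNm, ← hνdef]
    exact measure_mono_null hNsub hnull
  constructor
  · intro k
    set SA := ee ιA k ∩ KK ιA with hSAdef
    set SC := KK ιC with hSCdef
    have hSA : MeasurableSet SA := (meE k).inter mKA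
    have hSC : MeasurableSet SC := mKC
    have hsub : SA ×ˢ SC ⊆ omEH ιA ιC := by
      rintro p ⟨⟨h1, hK1⟩, hK2⟩
      exact ⟨⟨hK1, hK2⟩, fun hb => absurd h1 (not_lt.mpr (hb.1 k).2)⟩
    have hsub2 : (ee ιA k ×ˢ (univ : Set (ιC → ℝ))) ∩ omEH ιA ιC ⊆ SA ×ˢ SC := by
      rintro p ⟨⟨h1, -⟩, ⟨hK1, hK2⟩, -⟩
      exact ⟨⟨h1, hK1⟩, hK2⟩
    have hposn : 0 < μ ((fun ω => (YA ω, YC ω)) ⁻¹' (SA ×ˢ SC)) := by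
      rw [← Measure.map_apply hY (hSA.prod hSC), ← hνdef]
      have h1 : ν (ee ιA k ×ˢ (univ : Set (ιC → ℝ))) ≠ 0 := pos_e_univ ν hop k
      rw [nu_inter ν hnull] at h1
      exact pos_iff_ne_zero.mpr fun h0 => h1 (measure_mono_null hsub2 h0)
    have hinner := hI SA SC hSA hSC hsub hposn
    intro HA HC hHA hHC
    have hsubE : (fun ω => (YA ω, YC ω)) ⁻¹' (SA ×ˢ SC) ⊆
        (fun ω => (YA ω, YC ω)) ⁻¹' (ee ιA k ×ˢ (univ : Set (ιC → ℝ))) :=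
      Set.preimage_mono (Set.prod_mono Set.inter_subset_left (Set.subset_univ _))
    have hnullE : μ ((fun ω => (YA ω, YC ω)) ⁻¹' (ee ιA k ×ˢ (univ : Set (ιC → ℝ))) \
        (fun ω => (YA ω, YC ω)) ⁻¹' (SA ×ˢ SC)) = 0 := by
      rw [← Set.preimage_diff]
      refine hmunull _ ?_ (((meE k).prod MeasurableSet.univ).diff (hSA.prod hSC))
      intro p hp hOm
      exact hp.2 (hsub2 ⟨hp.1, hOm⟩)
    rw [eventA YA YC k,
      cond_value_congr μ hsubE hnullE ((hA hHA).inter (hC hHC)),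
      cond_value_congr μ hsubE hnullE (hA hHA),
      cond_value_congr μ hsubE hnullE (hC hHC)]
    exact hinner HA HC hHA hHC
  · intro k
    set SA := KK ιA with hSAdef
    set SC := ee ιC k ∩ KK ιC with hSCdef
    have hSA : MeasurableSet SA := mKA
    have hSC : MeasurableSet SC := (meF k).inter mKC
    have hsub : SA ×ˢ SC ⊆ omEH ιA ιC := by
      rintro p ⟨hK1, h1, hK2⟩
      exact ⟨⟨hK1, hK2⟩, fun hb => absurd h1 (not_lt.mpr (hb.2 k).2)⟩
    have hsub2 : ((univ : Set (ιA → ℝ)) ×ˢ ee ιC k) ∩ omEH ιA ιC ⊆ SA ×ˢ SC := by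
      rintro p ⟨⟨-, h1⟩, ⟨hK1, hK2⟩, -⟩
      exact ⟨hK1, h1, hK2⟩
    have hposn : 0 < μ ((fun ω => (YA ω, YC ω)) ⁻¹' (SA ×ˢ SC)) := by
      rw [← Measure.map_apply hY (hSA.prod hSC), ← hνdef]
      have h1 : ν ((univ : Set (ιA → ℝ)) ×ˢ ee ιC k) ≠ 0 := pos_univ_f ν hop k
      rw [nu_inter ν hnull] at h1
      exact pos_iff_ne_zero.mpr fun h0 => h1 (measure_mono_null hsub2 h0)
    have hinner := hI SA SC hSA hSC hsub hposn
    intro HA HC hHA hHC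
    have hsubE : (fun ω => (YA ω, YC ω)) ⁻¹' (SA ×ˢ SC) ⊆
        (fun ω => (YA ω, YC ω)) ⁻¹' ((univ : Set (ιA → ℝ)) ×ˢ ee ιC k) :=
      Set.preimage_mono (Set.prod_mono (Set.subset_univ _) Set.inter_subset_left)
    have hnullE : μ ((fun ω => (YA ω, YC ω)) ⁻¹' ((univ : Set (ιA → ℝ)) ×ˢ ee ιC k) \
        (fun ω => (YA ω, YC ω)) ⁻¹' (SA ×ˢ SC)) = 0 := by
      rw [← Set.preimage_diff]
      refine hmunull _ ?_ ((MeasurableSet.univ.prod (meF k)).diff (hSA.prod hSC))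
      intro p hp hOm
      exact hp.2 (hsub2 ⟨hp.1, hOm⟩)
    rw [eventC YA YC k,
      cond_value_congr μ hsubE hnullE ((hA hHA).inter (hC hHC)),
      cond_value_congr μ hsubE hnullE (hA hHA),
      cond_value_congr μ hsubE hnullE (hC hHC)]
    exact hinner HA HC hHA hHC

lemma eh_to_outer {Ω₀ ιA ιC : Type} [MeasurableSpace Ω₀] [Countable ιA] [Countable ιC]
    [Nonempty ιA] [Nonempty ιC]
    (μ : Measure Ω₀) [IsProbabilityMeasure μ] (YA : Ω₀ → ιA → ℝ) (YC : Ω₀ → ιC → ℝ)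
    (hA : Measurable YA) (hC : Measurable YC)
    (hsupp : HasSupport (μ.map fun ω => (YA ω, YC ω)) (omEH ιA ιC))
    (hEH : EHIndep μ YA YC) : OuterIndep μ YA YC (omEH ιA ιC) := by
  obtain ⟨hnull, hop⟩ := hsupp
  have hY : Measurable fun ω => (YA ω, YC ω) := hA.prodMk hC
  haveI : IsProbabilityMeasure (μ.map fun ω => (YA ω, YC ω)) :=
    Measure.isProbabilityMeasure_map hY.aemeasurable
  set ν := μ.map fun ω => (YA ω, YC ω) with hνdef
  have meE : ∀ k : ιA, MeasurableSet (ee ιA k) := fun k =>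
    measurableSet_lt measurable_const (measurable_pi_apply k)
  have meF : ∀ k : ιC, MeasurableSet (ee ιC k) := fun k =>
    measurableSet_lt measurable_const (measurable_pi_apply k)
  have hfA : ∀ (k : ιA) (T : Set (ιA → ℝ)), MeasurableSet T → T ⊆ ee ιA k →
      ∀ (C : Set (ιC → ℝ)), MeasurableSet C →
      ν (T ×ˢ C) * ν (ee ιA k ×ˢ univ) = ν (T ×ˢ univ) * ν (ee ιA k ×ˢ C) := by
    intro k T hT hsub C hc
    by_cases hw : ν (ee ιA k ×ˢ (univ : Set (ιC → ℝ))) = 0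
    · rw [hw, mul_zero,
        measure_mono_null (Set.prod_mono_right (Set.subset_univ _)) hw, mul_zero]
    · have hcond := hEH.1 k T C hT hc
      rw [eventA YA YC k, preAC YA YC T C, preA YA YC T, preC YA YC C,
        cond_map μ hY ((meE k).prod MeasurableSet.univ) (hT.prod hc),
        cond_map μ hY ((meE k).prod MeasurableSet.univ) (hT.prod MeasurableSet.univ),
        cond_map μ hY ((meE k).prod MeasurableSet.univ) (MeasurableSet.univ.prod hc),
        ← hνdef] at hcond
      rw [cond_apply' (hT.prod hc), cond_apply' (hT.prod MeasurableSet.univ),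
        cond_apply' (MeasurableSet.univ.prod hc)] at hcond
      simp only [Set.prod_inter_prod, Set.inter_eq_right.mpr hsub, Set.univ_inter,
        Set.inter_univ] at hcond
      exact cancel3 hw (measure_ne_top ν _) hcond
  have hfC : ∀ (k : ιC) (T : Set (ιC → ℝ)), MeasurableSet T → T ⊆ ee ιC k →
      ∀ (C : Set (ιA → ℝ)), MeasurableSet C →
      ν (C ×ˢ T) * ν (univ ×ˢ ee ιC k) = ν (univ ×ˢ T) * ν (C ×ˢ ee ιC k) := by
    intro k T hT hsub C hc
    by_cases hw : ν ((univ : Set (ιA → ℝ)) ×ˢ ee ιC k) = 0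
    · rw [hw, mul_zero,
        measure_mono_null (Set.prod_mono_left (Set.subset_univ _)) hw, mul_zero]
    · have hcond := hEH.2 k C T hc hT
      rw [eventC YA YC k, preAC YA YC C T, preA YA YC C, preC YA YC T,
        cond_map μ hY (MeasurableSet.univ.prod (meF k)) (hc.prod hT),
        cond_map μ hY (MeasurableSet.univ.prod (meF k)) (hc.prod MeasurableSet.univ),
        cond_map μ hY (MeasurableSet.univ.prod (meF k)) (MeasurableSet.univ.prod hT),
        ← hνdef] at hcond
      rw [cond_apply' (hc.prod hT), cond_apply' (hc.prod MeasurableSet.univ),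
        cond_apply' (MeasurableSet.univ.prod hT)] at hcond
      simp only [Set.prod_inter_prod, Set.inter_eq_right.mpr hsub, Set.univ_inter,
        Set.inter_univ] at hcond
      -- hcond : w⁻¹ * ν (C ×ˢ T) = (w⁻¹ * ν (C ×ˢ f)) * (w⁻¹ * ν (univ ×ˢ T))
      have h := cancel3 hw (measure_ne_top ν _) hcond
      -- h : ν (C ×ˢ T) * ν (univ ×ˢ f) = ν (C ×ˢ f) * ν (univ ×ˢ T)
      rw [h]; ring
  obtain ⟨αm, γm, hαp, hγp, hαK, hγK, hfinal⟩ := nu_main ν hnull hop hfA hfC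
  refine ⟨(ιA → ℝ) × (ιC → ℝ), inferInstance, αm.prod γm, Prod.fst, Prod.snd, KK ιA, KK ιC,
    inferInstance, measurable_fst, measurable_snd, ?_, ?_, ?_, ?_⟩
  · rintro p ⟨⟨h1, h2⟩, -⟩
    exact ⟨h1, h2⟩
  · have hpre : (fun ω : (ιA → ℝ) × (ιC → ℝ) => (ω.1, ω.2)) ⁻¹' (KK ιA ×ˢ KK ιC)
        = KK ιA ×ˢ KK ιC := rfl
    rw [hpre, Measure.prod_prod, hαK, hγK, mul_one]
  · rw [indepFun_iff_measure_inter_preimage_eq_mul]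
    intro s t hs ht
    have h1 : (Prod.fst ⁻¹' s : Set ((ιA → ℝ) × (ιC → ℝ))) = s ×ˢ univ := by
      ext p; simp [Set.mem_prod]
    have h2 : (Prod.snd ⁻¹' t : Set ((ιA → ℝ) × (ιC → ℝ))) = univ ×ˢ t := by
      ext p; simp [Set.mem_prod]
    rw [h1, h2, Set.prod_inter_prod, Set.inter_univ, Set.univ_inter, Measure.prod_prod,
      Measure.prod_prod, Measure.prod_prod, measure_univ, measure_univ, mul_one, one_mul]
  · have hpre : (fun ω : (ιA → ℝ) × (ιC → ℝ) => (ω.1, ω.2)) ⁻¹' (omEH ιA ιC)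
        = omEH ιA ιC := rfl
    rw [hpre, hfinal]
    have hid : (fun ω : (ιA → ℝ) × (ιC → ℝ) => (ω.1, ω.2)) = fun x => x := by
      funext p; rfl
    rw [hid, Measure.map_id', hνdef]

end Stmt8Aux

/-- for `Ω = [0,∞)^d \ [0,1]^d` (case `B = ∅`), outer, inner, and Engelke–Hitz
independence coincide, with no distributional assumptions on `Y` beyond its support being `Ω`. -/
theorem stmt8 {Ω₀ ιA ιC : Type} [MeasurableSpace Ω₀] [Nonempty ιA] [Nonempty ιC]
    (μ : Measure Ω₀) [IsProbabilityMeasure μ]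
    (YA : Ω₀ → ιA → ℝ) (YC : Ω₀ → ιC → ℝ)
    (hA : Measurable YA) (hC : Measurable YC)
    (hsupp : HasSupport (μ.map fun ω => (YA ω, YC ω)) (omEH ιA ιC)) :
    (OuterIndep μ YA YC (omEH ιA ιC) ↔ InnerIndep μ YA YC (omEH ιA ιC)) ∧
    (InnerIndep μ YA YC (omEH ιA ιC) ↔ EHIndep μ YA YC) := by
  have hY : Measurable fun ω => (YA ω, YC ω) := hA.prodMk hC
  haveI : IsProbabilityMeasure (μ.map fun ω => (YA ω, YC ω)) :=
    Measure.isProbabilityMeasure_map hY.aemeasurable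
  by_cases hcA : Countable ιA
  · by_cases hcC : Countable ιC
    · haveI := hcA
      haveI := hcC
      have hOI := Stmt8Aux.outer_to_inner μ YA YC hA hC
      have hIE := Stmt8Aux.inner_to_eh μ YA YC hA hC hsupp
      have hEO := Stmt8Aux.eh_to_outer μ YA YC hA hC hsupp
      exact ⟨⟨hOI, fun h => hEO (hIE h)⟩, ⟨hIE, fun h => hOI (hEO h)⟩⟩
    · exact (Stmt8Aux.not_support_uncountable_right hcC _ hsupp.1).elim
  · exact (Stmt8Aux.not_support_uncountable_left hcA _ hsupp.1).elim


end
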